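/- Let r ≥ 4 be even and A a primitive 4r-th root of unity, [n] = (A^{2n}−A^{−2n})/(A²−A^{−2}). Then for every integer m with 1 ≤ m ≤ r−1: ∑_{n even, 2 ≤ n ≤ r−2} [n]·[nm] = (−r/(A²−A^{−2})²) · (δ_{m,1} − δ_{m,r−1}). -/

import Mathlib

noncomputable def qint (A : ℂ) (n : ℕ) : ℂ :=
  (A ^ (2 * n) - A⁻¹ ^ (2 * n)) / (A ^ 2 - A⁻¹ ^ 2)

/-- Pair geometric sum: if `x ≠ 1`, `x ^ s = ε`, `ε ^ 2 = 1`, then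
`∑_{k=1}^{s-1} (x^k + x⁻¹^k) = -(1 + ε)`. -/
lemma stmt7_pair_sum {s : ℕ} (hs : 1 ≤ s) (x ε : ℂ) (hx1 : x ≠ 1) (hxs : x ^ s = ε)
    (hε : ε ^ 2 = 1) :
    ∑ k ∈ Finset.Icc 1 (s - 1), (x ^ k + x⁻¹ ^ k) = -(1 + ε) := by
  have hε0 : ε ≠ 0 := by intro h; rw [h] at hε; simp at hε
  have hx0 : x ≠ 0 := by rintro rfl; rw [zero_pow (by omega)] at hxs; exact hε0 hxs.symm
  have hxi1 : x⁻¹ ≠ 1 := fun h => hx1 (inv_eq_one.mp h)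
  have hεinv : ε⁻¹ = ε := inv_eq_of_mul_eq_one_right (by linear_combination hε)
  have hxis : x⁻¹ ^ s = ε := by rw [inv_pow, hxs, hεinv]
  have key : ∀ y : ℂ, y ≠ 1 → y ^ s = ε →
      ∑ k ∈ Finset.Icc 1 (s - 1), y ^ k = (ε - 1) / (y - 1) - 1 := by
    intro y hy1 hys
    have hIcc : Finset.Icc 1 (s - 1) = Finset.Ico 1 s := by
      rw [← Finset.Ico_add_one_right_eq_Icc]; congr 1; omega
    rw [hIcc, Finset.sum_Ico_eq_sub _ hs, geom_sum_eq hy1, hys]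
    simp
  rw [Finset.sum_add_distrib, key x hx1 hxs, key x⁻¹ hxi1 hxis]
  have hx1' : x - 1 ≠ 0 := sub_ne_zero.mpr hx1
  have hxi1' : x⁻¹ - 1 ≠ 0 := sub_ne_zero.mpr hxi1
  have h1x : (1 : ℂ) - x ≠ 0 := sub_ne_zero.mpr fun h => hx1 h.symm
  field_simp
  ring

lemma stmt7_prod_expand (B C : ℂ) (hBC : B * C = 1) (t : ℕ) :
    (B - C) * (B ^ (t + 1) - C ^ (t + 1)) = B ^ (t + 2) + C ^ (t + 2) - (B ^ t + C ^ t) := by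
  linear_combination (-(B ^ t) - C ^ t) * hBC

theorem stmt_7 (r : ℕ) (hr : 4 ≤ r) (hre : Even r) (A : ℂ)
    (hA : IsPrimitiveRoot A (4 * r)) (m : ℕ) (hm1 : 1 ≤ m) (hm2 : m ≤ r - 1) :
    ∑ n ∈ (Finset.Icc 1 (r - 1)).filter (fun n => Even n), qint A n * qint A (n * m) =
      (-(r : ℂ) / (A ^ 2 - A⁻¹ ^ 2) ^ 2) *
        ((if m = 1 then (1 : ℂ) else 0) - (if m = r - 1 then (1 : ℂ) else 0)) := by
  have hA0 : A ≠ 0 := hA.ne_zero (by omega)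
  obtain ⟨s, hs⟩ := hre
  have hs2 : 2 ≤ s := by omega
  set ζ : ℂ := A ^ 4 with hζdef
  have hζ : IsPrimitiveRoot ζ r := hA.pow (by omega) (by ring)
  have hζ0 : ζ ≠ 0 := pow_ne_zero _ hA0
  have hζr : ζ ^ r = 1 := hζ.pow_eq_one
  -- d ≠ 0
  have hd : A ^ 2 - A⁻¹ ^ 2 ≠ 0 := by
    intro h
    have h2 : A ^ 2 = A⁻¹ ^ 2 := sub_eq_zero.mp h
    have h4 : A ^ 4 = 1 := by
      calc A ^ 4 = A ^ 2 * A ^ 2 := by ring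
        _ = A ^ 2 * A⁻¹ ^ 2 := by rw [← h2]
        _ = (A * A⁻¹) ^ 2 := by ring
        _ = 1 := by rw [mul_inv_cancel₀ hA0, one_pow]
    exact hA.pow_ne_one_of_pos_of_lt (by norm_num) (by omega) h4
  -- ζ ^ s = -1
  have hζs2 : (ζ ^ s) ^ 2 = 1 := by
    rw [← pow_mul, show s * 2 = r by omega, hζr]
  have hζsne : ζ ^ s ≠ 1 := hζ.pow_ne_one_of_pos_of_lt (by omega) (by omega)
  have hζs : ζ ^ s = -1 := by
    have hfac : (ζ ^ s - 1) * (ζ ^ s + 1) = 0 := by linear_combination hζs2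
    rcases mul_eq_zero.mp hfac with h | h
    · exact absurd (sub_eq_zero.mp h) hζsne
    · exact eq_neg_of_add_eq_zero_left h
  -- reindex the sum
  have himg : (Finset.Icc 1 (r - 1)).filter (fun n => Even n)
      = (Finset.Icc 1 (s - 1)).image (fun k => 2 * k) := by
    ext n
    simp only [Finset.mem_filter, Finset.mem_Icc, Finset.mem_image, Nat.even_iff]
    constructor
    · rintro ⟨⟨h1, h2⟩, h3⟩
      exact ⟨n / 2, ⟨by omega, by omega⟩, by omega⟩
    · rintro ⟨k, ⟨hk1, hk2⟩, rfl⟩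
      omega
  rw [himg, Finset.sum_image (fun a _ b _ h => by omega)]
  -- per-term expansion
  have hterm : ∀ k : ℕ, qint A (2 * k) * qint A (2 * k * m)
      = ((ζ ^ (m + 1)) ^ k + (ζ⁻¹ ^ (m + 1)) ^ k
          - ((ζ ^ (m - 1)) ^ k + (ζ⁻¹ ^ (m - 1)) ^ k)) / (A ^ 2 - A⁻¹ ^ 2) ^ 2 := by
    intro k
    obtain ⟨t, rfl⟩ : ∃ t, m = t + 1 := ⟨m - 1, by omega⟩
    simp only [qint, Nat.add_sub_cancel]
    rw [div_mul_div_comm, ← sq]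
    congr 1
    have hBC : A ^ (4 * k) * (A ^ (4 * k))⁻¹ = 1 := mul_inv_cancel₀ (pow_ne_zero _ hA0)
    have e1 : A ^ (2 * (2 * k)) = A ^ (4 * k) := by rw [show 2 * (2 * k) = 4 * k by ring]
    have e2 : A⁻¹ ^ (2 * (2 * k)) = (A ^ (4 * k))⁻¹ := by
      rw [show 2 * (2 * k) = 4 * k by ring, inv_pow]
    have e3 : A ^ (2 * (2 * k * (t + 1))) = (A ^ (4 * k)) ^ (t + 1) := by
      rw [show 2 * (2 * k * (t + 1)) = 4 * k * (t + 1) by ring, pow_mul]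
    have e4 : A⁻¹ ^ (2 * (2 * k * (t + 1))) = ((A ^ (4 * k))⁻¹) ^ (t + 1) := by
      rw [show 2 * (2 * k * (t + 1)) = 4 * k * (t + 1) by ring, pow_mul, inv_pow]
    have e5 : ∀ a : ℕ, (ζ ^ a) ^ k = (A ^ (4 * k)) ^ a := by
      intro a
      rw [hζdef, ← pow_mul, ← pow_mul, show 4 * (a * k) = 4 * k * a by ring, pow_mul]
    have e6 : ∀ a : ℕ, (ζ⁻¹ ^ a) ^ k = ((A ^ (4 * k))⁻¹) ^ a := by
      intro a
      simp only [inv_pow]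
      rw [e5]
    rw [e1, e2, e3, e4, e5, e5, e6, e6]
    exact stmt7_prod_expand _ _ hBC t
  simp only [hterm]
  rw [← Finset.sum_div, Finset.sum_sub_distrib]
  -- pair sums in exactly the shapes appearing in the goal
  have hpair : ∀ a : ℕ, 0 < a → a < r → ∀ ε : ℂ, ζ ^ (a * s) = ε → ε ^ 2 = 1 →
      ∑ k ∈ Finset.Icc 1 (s - 1), ((ζ ^ a) ^ k + (ζ⁻¹ ^ a) ^ k) = -(1 + ε) := by
    intro a ha0 har ε hε hε2
    have h := stmt7_pair_sum (s := s) (by omega) (ζ ^ a) ε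
      (hζ.pow_ne_one_of_pos_of_lt ha0.ne' har) (by rw [← pow_mul]; exact hε) hε2
    rw [← h]
    exact Finset.sum_congr rfl fun k _ => by rw [inv_pow ζ a]
  have hconst : ∀ a : ℕ, ζ ^ a = 1 →
      ∑ k ∈ Finset.Icc 1 (s - 1), ((ζ ^ a) ^ k + (ζ⁻¹ ^ a) ^ k) = 2 * ((s : ℂ) - 1) := by
    intro a ha
    have : ∀ k, (ζ ^ a) ^ k + (ζ⁻¹ ^ a) ^ k = 2 := by
      intro k
      rw [inv_pow ζ a, ha, inv_one, one_pow]
      norm_num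
    rw [Finset.sum_congr rfl fun k _ => this k, Finset.sum_const, Nat.card_Icc,
      show s - 1 + 1 - 1 = s - 1 by omega, nsmul_eq_mul, Nat.cast_sub (by omega : 1 ≤ s)]
    push_cast
    ring
  have hrc : (r : ℂ) = 2 * (s : ℂ) := by rw [hs]; push_cast; ring
  by_cases hm : m = 1
  · subst hm
    rw [if_pos rfl, if_neg (by omega)]
    rw [hpair (1 + 1) (by omega) (by omega) 1
        (by rw [show (1 + 1) * s = r by omega, hζr]) (by norm_num),
      hconst (1 - 1) (by norm_num)]
    rw [hrc]
    field_simp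
    ring
  · by_cases hm' : m = r - 1
    · subst hm'
      rw [if_neg (by omega), if_pos rfl]
      have hc : ζ ^ (r - 1 + 1) = 1 := by rw [show r - 1 + 1 = r by omega, hζr]
      have hexp : (r - 1 - 1) * s = r * (s - 1) := by
        obtain ⟨t, ht⟩ : ∃ t, s = t + 2 := ⟨s - 2, by omega⟩
        subst ht hs
        rw [show t + 2 + (t + 2) - 1 - 1 = 2 * t + 2 by omega,
          show t + 2 - 1 = t + 1 by omega]
        ring
      rw [hconst (r - 1 + 1) hc,
        hpair (r - 1 - 1) (by omega) (by omega) 1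
          (by rw [hexp, pow_mul, hζr, one_pow]) (by norm_num)]
      rw [hrc]
      field_simp
      ring
    · have hmlt : m < r - 1 := by omega
      rw [if_neg hm, if_neg hm']
      have heval : ∀ a : ℕ, ζ ^ (a * s) = (-1 : ℂ) ^ a := by
        intro a
        rw [mul_comm, pow_mul, hζs]
      have hsq : ∀ a : ℕ, ((-1 : ℂ) ^ a) ^ 2 = 1 := by
        intro a
        rw [← pow_mul, mul_comm, pow_mul]
        norm_num
      rw [hpair (m + 1) (by omega) (by omega) _ (heval (m + 1)) (hsq (m + 1)),
        hpair (m - 1) (by omega) (by omega) _ (heval (m - 1)) (hsq (m - 1))]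
      have hpar : (-1 : ℂ) ^ (m + 1) = (-1 : ℂ) ^ (m - 1) := by
        rw [show m + 1 = (m - 1) + 2 by omega, pow_add]
        norm_num
      rw [hpar]
      ring
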